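/- arXiv:1503.03810 — 5 statements merged into one kernel-verified Lean document; each statement's English description precedes it below -/
import Mathlib

section
/- Suppose g : ℕ → ℝ is a nondecreasing function satisfying g(n^j) ≤ j·g(n) for all j, n ∈ ℕ. Then the limit lim_{n→∞} g(n)/ln n exists and equals inf_{n ≥ 2} g(n)/ln n. -/
open Filter

theorem tendsto_div_log_of_submultiplicative (g : ℕ → ℝ)
    (hmono : ∀ m n : ℕ, 1 ≤ m → m ≤ n → g m ≤ g n)
    (hsub : ∀ j n : ℕ, 1 ≤ j → 1 ≤ n → g (n ^ j) ≤ j * g n) :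
    Filter.Tendsto (fun n : ℕ => g n / Real.log n) Filter.atTop
      (nhds (⨅ n : {m : ℕ // 2 ≤ m}, g n / Real.log n)) := by
  have hg0 : ∀ n : ℕ, 1 ≤ n → 0 ≤ g n := by
    intro n hn
    have h1 : g n ≤ g (n ^ 2) := hmono n (n ^ 2) hn (Nat.le_self_pow two_ne_zero n)
    have h2 : g (n ^ 2) ≤ 2 * g n := by
      have := hsub 2 n one_le_two hn
      simpa using this
    linarith
  have hlogpos : ∀ n : ℕ, 2 ≤ n → 0 < Real.log n := by
    intro n hn
    apply Real.log_pos
    exact_mod_cast hn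
  have hbdd : BddBelow (Set.range fun n : {m : ℕ // 2 ≤ m} => g n / Real.log n) := by
    refine ⟨0, ?_⟩
    rintro x ⟨⟨n, hn⟩, rfl⟩
    exact div_nonneg (hg0 n (by omega)) (hlogpos n hn).le
  set L := ⨅ n : {m : ℕ // 2 ≤ m}, g n / Real.log n with hL
  have hLle : ∀ n : ℕ, 2 ≤ n → L ≤ g n / Real.log n := fun n hn => ciInf_le hbdd ⟨n, hn⟩
  rw [Metric.tendsto_atTop]
  intro ε hε
  obtain ⟨⟨n₀, hn₀⟩, hv⟩ : ∃ i : {m : ℕ // 2 ≤ m}, g i / Real.log i < L + ε / 2 :=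
    exists_lt_of_ciInf_lt (by linarith)
  simp only at hv
  set v := g n₀ / Real.log n₀ with hvdef
  have hv0 : 0 ≤ v := div_nonneg (hg0 n₀ (by omega)) (hlogpos n₀ hn₀).le
  obtain ⟨K₀, hK₀⟩ := exists_nat_gt (2 * v / ε)
  set K := max K₀ 1 with hKdef
  have hK1 : 1 ≤ K := le_max_right _ _
  have hKbig : 2 * v / ε < K := lt_of_lt_of_le hK₀ (by exact_mod_cast le_max_left _ _)
  have hKpos : (0:ℝ) < K := by positivity
  have hvK : v / K < ε / 2 := by
    rw [div_lt_iff₀ hKpos] at *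
    rw [div_lt_iff₀ hε] at hKbig
    nlinarith
  refine ⟨n₀ ^ K, ?_⟩
  intro N hN
  have hb : 1 < n₀ := hn₀
  have hN2 : 2 ≤ N := le_trans (le_trans hn₀ (Nat.le_self_pow (by omega) n₀)) hN
  have hNne : N ≠ 0 := by omega
  set k := Nat.log n₀ N with hkdef
  have hkK : K ≤ k := (Nat.le_log_iff_pow_le hb hNne).mpr hN
  have hk1 : 1 ≤ k := le_trans hK1 hkK
  have hlow : n₀ ^ k ≤ N := Nat.pow_log_le_self n₀ hNne
  have hhigh : N < n₀ ^ (k + 1) := Nat.lt_pow_succ_log_self hb N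
  have hgN : g N ≤ (k + 1 : ℝ) * g n₀ := by
    have h1 : g N ≤ g (n₀ ^ (k + 1)) := hmono N _ (by omega) hhigh.le
    have h2 : g (n₀ ^ (k + 1)) ≤ ((k + 1 : ℕ) : ℝ) * g n₀ :=
      hsub (k + 1) n₀ (by omega) (by omega)
    push_cast at h2
    linarith
  have hlogN : (k : ℝ) * Real.log n₀ ≤ Real.log N := by
    have hcast : ((n₀ : ℝ)) ^ k ≤ (N : ℝ) := by exact_mod_cast hlow
    have := Real.log_le_log (by positivity) hcast
    rwa [Real.log_pow] at this
  have hklogpos : (0:ℝ) < (k : ℝ) * Real.log n₀ := by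
    have := hlogpos n₀ hn₀
    have : (0:ℝ) < (k:ℝ) := by exact_mod_cast hk1
    positivity
  have hlogNpos : 0 < Real.log N := hlogpos N hN2
  have hdiv : g N / Real.log N ≤ ((k : ℝ) + 1) * g n₀ / ((k : ℝ) * Real.log n₀) := by
    apply div_le_div₀ _ hgN hklogpos hlogN
    have : (0:ℝ) ≤ (k:ℝ) + 1 := by positivity
    exact mul_nonneg this (hg0 n₀ (by omega))
  have hkne : (k:ℝ) ≠ 0 := by
    have : (0:ℝ) < (k:ℝ) := by exact_mod_cast hk1
    exact this.ne'
  have hlne : Real.log n₀ ≠ 0 := (hlogpos n₀ hn₀).ne'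
  have heq : ((k : ℝ) + 1) * g n₀ / ((k : ℝ) * Real.log n₀) = v + v / k := by
    rw [hvdef]
    field_simp
  have hvk : v / k ≤ v / K := by
    apply div_le_div_of_nonneg_left hv0 hKpos
    exact_mod_cast hkK
  have hupper : g N / Real.log N < L + ε := by
    rw [heq] at hdiv
    have : v / k < ε / 2 := lt_of_le_of_lt hvk hvK
    linarith
  have hlower : L ≤ g N / Real.log N := hLle N hN2
  rw [Real.dist_eq, abs_lt]
  constructor <;> linarith
end

section
/- For any set A ⊆ ℕ of positive integers, the limit lim_{n→∞} sup_{k ≥ 1} (1/ln n) · Σ_{x ∈ A ∩ [k, nk]} 1/x exists and equals inf_{n ≥ 2} sup_{k ≥ 1} (1/ln n) · Σ_{x ∈ A ∩ [k, nk]} 1/x. -/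
open Filter

/-- The quantity `sup_{k ≥ 1} (1/ln n) · Σ_{x ∈ A ∩ [k, nk]} 1/x`. -/
noncomputable def lBDseq (A : Set ℕ) (n : ℕ) : ℝ :=
  ⨆ k : {k : ℕ // 1 ≤ k},
    (1 / Real.log n) * ∑ x ∈ Finset.Icc (k : ℕ) (n * k), Set.indicator A (fun x => 1 / (x : ℝ)) x

/-- The upper Banach logarithmic density, `ℓBD(A) = lim_{n→∞} lBDseq A n`.
Since the limit always exists, it coincides with the `limsup`, which we use as definition. -/
noncomputable def lBD (A : Set ℕ) : ℝ :=
  Filter.limsup (lBDseq A) Filter.atTop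

/-- auxiliary: the inner sum -/
noncomputable def ggAux (A : Set ℕ) (n k : ℕ) : ℝ :=
  ∑ x ∈ Finset.Icc k (n * k), Set.indicator A (fun x => 1 / (x : ℝ)) x

/-- auxiliary: the unnormalized sup -/
noncomputable def ffAux (A : Set ℕ) (n : ℕ) : ℝ :=
  ⨆ k : {k : ℕ // 1 ≤ k}, ggAux A n k

lemma ggAux_nonneg (A : Set ℕ) (n k : ℕ) : 0 ≤ ggAux A n k :=
  Finset.sum_nonneg fun x _ => Set.indicator_nonneg (fun x _ => by positivity) x

lemma ggAux_le (A : Set ℕ) {n k : ℕ} (hk : 1 ≤ k) : ggAux A n k ≤ n := by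
  have hk' : (0:ℝ) < k := by exact_mod_cast hk
  have h1 : ∀ x ∈ Finset.Icc k (n * k), Set.indicator A (fun x => 1 / (x : ℝ)) x ≤ 1 / k := by
    intro x hx
    rw [Finset.mem_Icc] at hx
    refine Set.indicator_apply_le' (fun _ => ?_) (fun _ => by positivity)
    exact one_div_le_one_div_of_le hk' (by exact_mod_cast hx.1)
  have hcard : ((n * k + 1 - k : ℕ) : ℝ) ≤ (n * k : ℕ) := by
    have : n * k + 1 - k ≤ n * k + 1 - 1 := Nat.sub_le_sub_left hk (n * k + 1)
    exact_mod_cast this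
  calc ggAux A n k ≤ ∑ _x ∈ Finset.Icc k (n * k), (1 : ℝ) / k := Finset.sum_le_sum h1
    _ = ((n * k + 1 - k : ℕ) : ℝ) * (1 / k) := by
        rw [Finset.sum_const, Nat.card_Icc, nsmul_eq_mul]
    _ ≤ ((n * k : ℕ) : ℝ) * (1 / k) := by
        apply mul_le_mul_of_nonneg_right hcard (by positivity)
    _ = n := by push_cast; field_simp

lemma ffAux_bdd (A : Set ℕ) (n : ℕ) :
    BddAbove (Set.range fun k : {k : ℕ // 1 ≤ k} => ggAux A n k) := by
  refine ⟨n, ?_⟩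
  rintro x ⟨k, rfl⟩
  exact ggAux_le A k.2

lemma ggAux_le_ffAux (A : Set ℕ) (n : ℕ) {k : ℕ} (hk : 1 ≤ k) : ggAux A n k ≤ ffAux A n :=
  le_ciSup (ffAux_bdd A n) ⟨k, hk⟩

lemma ffAux_nonneg (A : Set ℕ) (n : ℕ) : 0 ≤ ffAux A n :=
  (ggAux_nonneg A n 1).trans (ggAux_le_ffAux A n le_rfl)

lemma ffAux_mono (A : Set ℕ) {n n' : ℕ} (h : n ≤ n') : ffAux A n ≤ ffAux A n' := by
  refine ciSup_mono (ffAux_bdd A n') fun k => ?_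
  refine Finset.sum_le_sum_of_subset_of_nonneg
    (Finset.Icc_subset_Icc_right (Nat.mul_le_mul_right k h))
    (fun x _ _ => Set.indicator_nonneg (fun x _ => by positivity) x)

lemma lBDseq_eq (A : Set ℕ) (n : ℕ) : lBDseq A n = (1 / Real.log n) * ffAux A n := by
  have h : (0:ℝ) ≤ 1 / Real.log n := by
    have := Real.log_natCast_nonneg n
    positivity
  rw [lBDseq, ffAux, Real.mul_iSup_of_nonneg h]
  rfl

lemma lBDseq_nonneg (A : Set ℕ) (n : ℕ) : 0 ≤ lBDseq A n := by
  rw [lBDseq_eq]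
  have : 0 ≤ Real.log n := Real.log_natCast_nonneg n
  have := ffAux_nonneg A n
  positivity

lemma ffAux_submul (A : Set ℕ) {n n' : ℕ} (hn : 1 ≤ n) :
    ffAux A (n * n') ≤ ffAux A n + ffAux A n' := by
  refine ciSup_le fun k => ?_
  have hk := k.2
  have hsub : Finset.Icc (k:ℕ) (n * n' * k) ⊆
      Finset.Icc (k:ℕ) (n * k) ∪ Finset.Icc (n * k) (n' * (n * k)) := by
    intro x hx
    rw [Finset.mem_Icc] at hx
    rcases le_or_gt x (n * k) with h | h
    · exact Finset.mem_union_left _ (Finset.mem_Icc.2 ⟨hx.1, h⟩)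
    · refine Finset.mem_union_right _ (Finset.mem_Icc.2 ⟨h.le, ?_⟩)
      calc x ≤ n * n' * k := hx.2
        _ = n' * (n * k) := by ring
  have hnonneg : ∀ x : ℕ, 0 ≤ Set.indicator A (fun x => 1 / (x : ℝ)) x :=
    fun x => Set.indicator_nonneg (fun x _ => by positivity) x
  calc ggAux A (n * n') k
      ≤ ∑ x ∈ Finset.Icc (k:ℕ) (n * k) ∪ Finset.Icc (n * k) (n' * (n * k)),
          Set.indicator A (fun x => 1 / (x : ℝ)) x :=
        Finset.sum_le_sum_of_subset_of_nonneg hsub (fun x _ _ => hnonneg x)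
    _ ≤ ggAux A n k + ggAux A n' (n * k) := by
        rw [ggAux, ggAux]
        have h := Finset.sum_union_inter (s₁ := Finset.Icc (k:ℕ) (n * k))
          (s₂ := Finset.Icc (n * k) (n' * (n * k)))
          (f := Set.indicator A (fun x => 1 / (x : ℝ)))
        have hint : 0 ≤ ∑ x ∈ Finset.Icc (k:ℕ) (n * k) ∩ Finset.Icc (n * k) (n' * (n * k)),
            Set.indicator A (fun x => 1 / (x : ℝ)) x :=
          Finset.sum_nonneg fun x _ => hnonneg x
        linarith
    _ ≤ ffAux A n + ffAux A n' :=
        add_le_add (ggAux_le_ffAux A n hk)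
          (ggAux_le_ffAux A n' (le_trans hk (Nat.le_mul_of_pos_left _ hn)))

lemma ffAux_pow (A : Set ℕ) {m : ℕ} (hm : 1 ≤ m) :
    ∀ t : ℕ, 1 ≤ t → ffAux A (m ^ t) ≤ t * ffAux A m := by
  intro t
  induction t with
  | zero => intro h; omega
  | succ t ih =>
    intro _
    rcases Nat.eq_zero_or_pos t with h | h
    · subst h; simp
    · have ht : 1 ≤ t := h
      have : ffAux A (m ^ (t + 1)) ≤ ffAux A (m ^ t) + ffAux A m := by
        rw [pow_succ]
        exact ffAux_submul A (Nat.one_le_pow _ _ hm)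
      have h2 := ih ht
      push_cast
      linarith

theorem lBDseq_tendsto (A : Set ℕ) (hA : ∀ a ∈ A, 0 < a) :
    Filter.Tendsto (lBDseq A) Filter.atTop (nhds (⨅ n : {m : ℕ // 2 ≤ m}, lBDseq A n)) := by
  set L := ⨅ n : {m : ℕ // 2 ≤ m}, lBDseq A n with hLdef
  have hbdd : BddBelow (Set.range fun n : {m : ℕ // 2 ≤ m} => lBDseq A n) :=
    ⟨0, by rintro x ⟨n, rfl⟩; exact lBDseq_nonneg A n⟩
  have hLle : ∀ n : ℕ, 2 ≤ n → L ≤ lBDseq A n := fun n hn => ciInf_le hbdd ⟨n, hn⟩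
  rw [Metric.tendsto_atTop]
  intro ε hε
  obtain ⟨m, hm⟩ := exists_lt_of_ciInf_lt (show L < L + ε / 2 by linarith)
  set s := lBDseq A (m : ℕ) with hs
  have hm2 : 2 ≤ (m : ℕ) := m.2
  have hs0 : 0 ≤ s := lBDseq_nonneg A m
  have hlogm : 0 < Real.log (m : ℕ) := Real.log_pos (by exact_mod_cast hm2)
  obtain ⟨J0, hJ0⟩ := exists_nat_ge (2 * s / ε)
  set J := max J0 1 with hJdef
  have hJ1 : 1 ≤ J := le_max_right _ _
  have hJpos : (0 : ℝ) < J := by exact_mod_cast hJ1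
  have hsJ : s / J ≤ ε / 2 := by
    have hJ0' : 2 * s / ε ≤ (J : ℝ) := le_trans hJ0 (by exact_mod_cast le_max_left J0 1)
    rw [div_le_iff₀ hJpos]
    have h2s : 2 * s ≤ ε * J := by
      calc 2 * s = ε * (2 * s / ε) := by field_simp
        _ ≤ ε * J := mul_le_mul_of_nonneg_left hJ0' hε.le
    linarith
  refine ⟨(m : ℕ) ^ J, fun n hn => ?_⟩
  have hn2 : 2 ≤ n := le_trans (le_trans hm2 (Nat.le_self_pow (by omega) (m : ℕ))) hn
  set j := Nat.log (m : ℕ) n with hjdef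
  have hjJ : J ≤ j := (Nat.le_log_iff_pow_le (by omega) (by omega)).2 hn
  have hj1 : 1 ≤ j := le_trans hJ1 hjJ
  have hjpos : (0 : ℝ) < j := by exact_mod_cast hj1
  have hmjn : (m : ℕ) ^ j ≤ n := Nat.pow_log_le_self (m : ℕ) (by omega)
  have hnmj : n ≤ (m : ℕ) ^ (j + 1) := (Nat.lt_pow_succ_log_self (by omega) n).le
  have hfn : ffAux A n ≤ ((j : ℝ) + 1) * ffAux A m := by
    have h1 : ffAux A n ≤ ffAux A ((m : ℕ) ^ (j + 1)) := ffAux_mono A hnmj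
    have h2 := ffAux_pow A (by omega : 1 ≤ (m : ℕ)) (j + 1) (by omega)
    push_cast at h2
    linarith
  have hlogn0 : 0 < Real.log n := Real.log_pos (by exact_mod_cast hn2)
  have hlogn : (j : ℝ) * Real.log (m : ℕ) ≤ Real.log n := by
    have h1 : Real.log (((m : ℕ) ^ j : ℕ) : ℝ) ≤ Real.log n := by
      apply Real.log_le_log (by positivity) (by exact_mod_cast hmjn)
    rwa [Nat.cast_pow, Real.log_pow] at h1
  have hFm0 : 0 ≤ ffAux A m := ffAux_nonneg A m
  have key : lBDseq A n ≤ ((j : ℝ) + 1) * ffAux A m / ((j : ℝ) * Real.log (m : ℕ)) := by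
    rw [lBDseq_eq, one_div, inv_mul_eq_div]
    exact div_le_div₀ (by positivity) hfn (by positivity) hlogn
  have hseq : ((j : ℝ) + 1) * ffAux A m / ((j : ℝ) * Real.log (m : ℕ)) = s + s / j := by
    have hsval : s = ffAux A m / Real.log (m : ℕ) := by
      rw [hs, lBDseq_eq, one_div, inv_mul_eq_div]
    rw [hsval]
    field_simp
  have hsj : s / j ≤ s / J := by
    rw [div_eq_mul_inv, div_eq_mul_inv]
    apply mul_le_mul_of_nonneg_left _ hs0
    rw [← one_div, ← one_div]
    exact one_div_le_one_div_of_le hJpos (by exact_mod_cast hjJ)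
  have hup : lBDseq A n < L + ε := by
    have := hLle n hn2
    calc lBDseq A n ≤ s + s / j := by rw [← hseq]; exact key
      _ ≤ s + ε / 2 := by linarith
      _ < L + ε := by linarith
  have hlow : L ≤ lBDseq A n := hLle n hn2
  rw [Real.dist_eq, abs_lt]
  constructor <;> linarith
end

section
/- Let A ⊆ ℕ be such that the upper Banach logarithmic density ℓBD(A) is positive, and fix l ∈ ℕ. Then there exists n ∈ ℕ such that, for any m ∈ ℕ, there exist a, r ∈ ℕ with a > m and r > m such that the geometric progression G = {a·r^i : i = 0, 1, …, l−1} is an n-approximate subset of A. -/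
open Filter

/-- A set `X` is an `n`-approximate subset of `A` if every `x ∈ X` satisfies
`x/n < a < x*n` for some `a ∈ A`. -/
def ApproxSubset (n : ℕ) (X A : Set ℕ) : Prop :=
  ∀ x ∈ X, ∃ a ∈ A, x < a * n ∧ a < x * n



/-- fattening of a finite set of naturals by `D` -/
noncomputable def fat (D : ℕ) (S : Finset ℕ) : Finset ℕ :=
  S.biUnion fun s => Finset.Icc (s - D) (s + D)

lemma fat_mono {D D' : ℕ} (h : D ≤ D') (S : Finset ℕ) : fat D S ⊆ fat D' S := by
  intro x hx
  obtain ⟨s, hs, hx⟩ := Finset.mem_biUnion.1 hx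
  have := Finset.mem_Icc.1 hx
  exact Finset.mem_biUnion.2 ⟨s, hs, Finset.mem_Icc.2 (by omega)⟩

lemma subset_fat (D : ℕ) (S : Finset ℕ) : S ⊆ fat D S := by
  intro s hs
  exact Finset.mem_biUnion.2 ⟨s, hs, Finset.mem_Icc.2 (by omega)⟩

lemma fat_card_le (D : ℕ) (S : Finset ℕ) (J : ℕ) (hS : S ⊆ Finset.range J) :
    (fat D S).card ≤ J + D := by
  have : fat D S ⊆ Finset.range (J + D) := by
    intro x hx
    obtain ⟨s, hs, hx⟩ := Finset.mem_biUnion.1 hx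
    have := Finset.mem_range.1 (hS hs)
    have := Finset.mem_Icc.1 hx
    exact Finset.mem_range.2 (by omega)
  simpa using Finset.card_le_card this

lemma core_count (S : Finset ℕ) (D₀ ρ l X₀ : ℕ)
    (h : (X₀ : ℝ) + l * (((fat (D₀ + l * ρ) S).card : ℝ) - ((fat D₀ S).card : ℝ))
        < ((fat D₀ S).card : ℝ)) :
    ∃ x, X₀ ≤ x ∧ ∀ i < l, ∃ s ∈ S, s ≤ x + i * ρ + D₀ ∧ x + i * ρ ≤ s + D₀ := by
  classical
  set E₀ := fat D₀ S with hE₀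
  set E' := fat (D₀ + l * ρ) S with hE'
  have hsub : E₀ ⊆ E' := fat_mono (by omega) S
  have hshift : ∀ i < l, ∀ x ∈ E₀, x + i * ρ ∈ E' := by
    intro i hi x hx
    obtain ⟨s, hs, hxs⟩ := Finset.mem_biUnion.1 hx
    have hxs' := Finset.mem_Icc.1 hxs
    refine Finset.mem_biUnion.2 ⟨s, hs, Finset.mem_Icc.2 ⟨by omega, ?_⟩⟩
    have : i * ρ ≤ l * ρ := Nat.mul_le_mul_right ρ (by omega)
    omega
  set G := E₀.filter (fun x => ∀ i < l, x + i * ρ ∈ E₀) with hG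
  have hGsub : G ⊆ E₀ := Finset.filter_subset _ _
  -- card of E₀ \ G
  have hsdiff : E₀ \ G ⊆ (Finset.range l).biUnion
      (fun i => E₀.filter fun x => x + i * ρ ∈ E' \ E₀) := by
    intro x hx
    rw [Finset.mem_sdiff] at hx
    obtain ⟨hx1, hx2⟩ := hx
    rw [hG, Finset.mem_filter] at hx2
    push_neg at hx2
    obtain ⟨i, hi, hbad⟩ := hx2 hx1
    refine Finset.mem_biUnion.2 ⟨i, Finset.mem_range.2 hi, Finset.mem_filter.2 ⟨hx1, ?_⟩⟩
    exact Finset.mem_sdiff.2 ⟨hshift i hi x hx1, hbad⟩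
  have hinj : ∀ i, (E₀.filter fun x => x + i * ρ ∈ E' \ E₀).card ≤ (E' \ E₀).card := by
    intro i
    apply Finset.card_le_card_of_injOn (fun x => x + i * ρ)
    · intro x hx
      exact (Finset.mem_filter.1 hx).2
    · intro x _ y _ hxy
      simpa using hxy
  have h1 : (E₀ \ G).card ≤ l * (E' \ E₀).card := by
    calc (E₀ \ G).card ≤ ((Finset.range l).biUnion
          (fun i => E₀.filter fun x => x + i * ρ ∈ E' \ E₀)).card :=
            Finset.card_le_card hsdiff
      _ ≤ ∑ i ∈ Finset.range l, (E₀.filter fun x => x + i * ρ ∈ E' \ E₀).card :=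
            Finset.card_biUnion_le
      _ ≤ ∑ _i ∈ Finset.range l, (E' \ E₀).card := Finset.sum_le_sum fun i _ => hinj i
      _ = l * (E' \ E₀).card := by simp [Finset.sum_const, mul_comm]
  have h2 : (E₀ \ G).card = E₀.card - G.card := Finset.card_sdiff_of_subset hGsub
  have h3 : (E' \ E₀).card = E'.card - E₀.card := Finset.card_sdiff_of_subset hsub
  have h4 : G.card ≤ E₀.card := Finset.card_le_card hGsub
  have h5 : E₀.card ≤ E'.card := Finset.card_le_card hsub
  have hnat : E₀.card ≤ G.card + l * (E'.card - E₀.card) := by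
    rw [h3] at h1; rw [h2] at h1; omega
  have hXG : (X₀ : ℝ) < (G.card : ℝ) := by
    have hc : ((E'.card - E₀.card : ℕ) : ℝ) = (E'.card : ℝ) - (E₀.card : ℝ) := by
      exact Nat.cast_sub h5
    have : ((E₀.card : ℕ) : ℝ) ≤ (G.card : ℝ) + l * ((E'.card : ℝ) - (E₀.card : ℝ)) := by
      have := (Nat.cast_le (α := ℝ)).2 hnat
      push_cast at this
      rw [hc] at this
      linarith
    linarith
  have hXG' : X₀ < G.card := by exact_mod_cast hXG
  have : ∃ x ∈ G, X₀ ≤ x := by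
    by_contra hcon
    push_neg at hcon
    have : G ⊆ Finset.range X₀ := fun x hx => Finset.mem_range.2 (hcon x hx)
    have := Finset.card_le_card this
    simp at this
    omega
  obtain ⟨x, hxG, hxX⟩ := this
  refine ⟨x, hxX, ?_⟩
  intro i hi
  have hx : x + i * ρ ∈ E₀ := (Finset.mem_filter.1 hxG).2 i hi
  obtain ⟨s, hs, hxs⟩ := Finset.mem_biUnion.1 hx
  have := Finset.mem_Icc.1 hxs
  exact ⟨s, hs, by omega, by omega⟩


lemma union_blocks (k J : ℕ) (hk : 1 ≤ k) :
    (Finset.range J).biUnion (fun j => Finset.Ico (k * 2 ^ j) (k * 2 ^ (j + 1)))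
      = Finset.Ico k (k * 2 ^ J) := by
  induction J with
  | zero => simp
  | succ J ih =>
    rw [Finset.range_add_one, Finset.biUnion_insert, ih, Finset.union_comm]
    rw [Finset.Ico_union_Ico_eq_Ico]
    · calc k = k * 2 ^ 0 := by ring
        _ ≤ k * 2 ^ J := by
          apply Nat.mul_le_mul_left
          exact Nat.pow_le_pow_right (by norm_num) (by omega)
    · apply Nat.mul_le_mul_left
      exact Nat.pow_le_pow_right (by norm_num) (by omega)

lemma block_sum_le (A : Set ℕ) (M : ℕ) (hM : 1 ≤ M) [Decidable (∃ a ∈ A, M ≤ a ∧ a < M * 2)] :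
    ∑ x ∈ Finset.Ico M (M * 2), Set.indicator A (fun x => 1 / (x : ℝ)) x
      ≤ if ∃ a ∈ A, M ≤ a ∧ a < M * 2 then (2 : ℝ) else 0 := by
  by_cases hg : ∃ a ∈ A, M ≤ a ∧ a < M * 2
  · rw [if_pos hg]
    have hbound : ∀ x ∈ Finset.Ico M (M * 2), Set.indicator A (fun x => 1 / (x : ℝ)) x ≤ 1 / M := by
      intro x hx
      have hx' := Finset.mem_Ico.1 hx
      have h1 : (0:ℝ) < M := by exact_mod_cast hM
      have h2 : (M:ℝ) ≤ x := by exact_mod_cast hx'.1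
      by_cases hxA : x ∈ A
      · rw [Set.indicator_of_mem hxA]
        apply one_div_le_one_div_of_le h1 h2
      · rw [Set.indicator_of_notMem hxA]
        positivity
    calc ∑ x ∈ Finset.Ico M (M * 2), Set.indicator A (fun x => 1 / (x : ℝ)) x
        ≤ (Finset.Ico M (M * 2)).card • (1 / (M:ℝ)) := Finset.sum_le_card_nsmul _ _ _ hbound
      _ = 1 := by
          rw [Nat.card_Ico, nsmul_eq_mul]
          have h1 : (0:ℝ) < M := by exact_mod_cast hM
          have : ((M * 2 - M : ℕ) : ℝ) = M := by
            have : M * 2 - M = M := by omega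
            rw [this]
          rw [this]
          field_simp
      _ ≤ 2 := by norm_num
  · rw [if_neg hg]
    apply le_of_eq
    apply Finset.sum_eq_zero
    intro x hx
    have hx' := Finset.mem_Ico.1 hx
    apply Set.indicator_of_notMem
    intro hxA
    exact hg ⟨x, hxA, hx'.1, hx'.2⟩


open scoped Classical in
lemma block_density (A : Set ℕ) (c : ℝ) (k N : ℕ) (hk : 1 ≤ k) (hN : 2 ≤ N)
    (h : c / 2 * Real.log N
      < ∑ x ∈ Finset.Icc k (N * k), Set.indicator A (fun x => 1 / (x : ℝ)) x) :
    c / 16 * ((Nat.log 2 N + 1 : ℕ) : ℝ)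
      ≤ (((Finset.range (Nat.log 2 N + 1)).filter
          (fun j => ∃ a ∈ A, k * 2 ^ j ≤ a ∧ a < k * 2 ^ (j + 1))).card : ℝ) := by
  set J := Nat.log 2 N + 1 with hJ
  have hNJ : N < 2 ^ J := Nat.lt_pow_succ_log_self (by norm_num) N
  have hlogN : 1 ≤ Nat.log 2 N := Nat.log_pos (by norm_num) hN
  -- nonneg of terms
  have hnn : ∀ x : ℕ, 0 ≤ Set.indicator A (fun x => 1 / (x : ℝ)) x := by
    intro x
    apply Set.indicator_nonneg
    intro y _
    positivity
  -- covering
  have hcover : Finset.Icc k (N * k) ⊆ Finset.Ico k (k * 2 ^ J) := by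
    intro x hx
    have hx' := Finset.mem_Icc.1 hx
    have : N * k < k * 2 ^ J := by
      calc N * k = k * N := by ring
        _ < k * 2 ^ J := by
          exact Nat.mul_lt_mul_of_le_of_lt (le_refl k) hNJ (by omega)
    exact Finset.mem_Ico.2 ⟨hx'.1, by omega⟩
  have hsum1 : ∑ x ∈ Finset.Icc k (N * k), Set.indicator A (fun x => 1 / (x : ℝ)) x
      ≤ ∑ x ∈ Finset.Ico k (k * 2 ^ J), Set.indicator A (fun x => 1 / (x : ℝ)) x :=
    Finset.sum_le_sum_of_subset_of_nonneg hcover (fun x _ _ => hnn x)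
  -- disjointness
  have hdisj : (↑(Finset.range J) : Set ℕ).PairwiseDisjoint
      (fun j => Finset.Ico (k * 2 ^ j) (k * 2 ^ (j + 1))) := by
    intro i _ j _ hij
    apply Finset.disjoint_left.2
    intro x hxi hxj
    have h1 := Finset.mem_Ico.1 hxi
    have h2 := Finset.mem_Ico.1 hxj
    rcases Nat.lt_or_ge i j with hlt | hge
    · have : k * 2 ^ (i + 1) ≤ k * 2 ^ j :=
        Nat.mul_le_mul_left k (Nat.pow_le_pow_right (by norm_num) (by omega))
      omega
    · have hlt : j < i := by omega
      have : k * 2 ^ (j + 1) ≤ k * 2 ^ i :=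
        Nat.mul_le_mul_left k (Nat.pow_le_pow_right (by norm_num) (by omega))
      omega
  have hsum2 : ∑ x ∈ Finset.Ico k (k * 2 ^ J), Set.indicator A (fun x => 1 / (x : ℝ)) x
      = ∑ j ∈ Finset.range J, ∑ x ∈ Finset.Ico (k * 2 ^ j) (k * 2 ^ (j + 1)),
          Set.indicator A (fun x => 1 / (x : ℝ)) x := by
    rw [← union_blocks k J hk, Finset.sum_biUnion hdisj]
  have hsum3 : ∑ j ∈ Finset.range J, ∑ x ∈ Finset.Ico (k * 2 ^ j) (k * 2 ^ (j + 1)),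
          Set.indicator A (fun x => 1 / (x : ℝ)) x
      ≤ ∑ j ∈ Finset.range J,
          (if ∃ a ∈ A, k * 2 ^ j ≤ a ∧ a < k * 2 ^ (j + 1) then (2:ℝ) else 0) := by
    apply Finset.sum_le_sum
    intro j _
    have hM : 1 ≤ k * 2 ^ j := Nat.one_le_iff_ne_zero.2 (by positivity)
    have heq : k * 2 ^ (j + 1) = (k * 2 ^ j) * 2 := by ring
    rw [heq]
    have := block_sum_le A (k * 2 ^ j) hM
    convert this using 2
  have hsum4 : ∑ j ∈ Finset.range J,
          (if ∃ a ∈ A, k * 2 ^ j ≤ a ∧ a < k * 2 ^ (j + 1) then (2:ℝ) else 0)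
      = 2 * (((Finset.range J).filter
          (fun j => ∃ a ∈ A, k * 2 ^ j ≤ a ∧ a < k * 2 ^ (j + 1))).card : ℝ) := by
    rw [← Finset.sum_filter]
    rw [Finset.sum_const]
    simp [mul_comm]
  -- lower bound on log N
  have hlog2 : (1:ℝ) / 2 ≤ Real.log 2 := by
    have := Real.log_two_gt_d9
    linarith
  have hpow : (2:ℝ) ^ (Nat.log 2 N) ≤ (N:ℝ) := by
    exact_mod_cast Nat.pow_log_le_self 2 (by omega)
  have hlogN2 : (Nat.log 2 N : ℝ) * Real.log 2 ≤ Real.log N := by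
    calc (Nat.log 2 N : ℝ) * Real.log 2 = Real.log ((2:ℝ) ^ (Nat.log 2 N)) := by
          rw [Real.log_pow]
      _ ≤ Real.log N := Real.log_le_log (by positivity) hpow
  have hJle : (J : ℝ) ≤ 2 * (Nat.log 2 N : ℝ) := by
    rw [hJ]
    push_cast
    have : (1:ℝ) ≤ (Nat.log 2 N : ℝ) := by exact_mod_cast hlogN
    linarith
  have hlogN3 : (J : ℝ) / 4 ≤ Real.log N := by
    have h0 : (0:ℝ) ≤ (Nat.log 2 N : ℝ) := by positivity
    nlinarith
  -- combine
  by_cases hc : 0 ≤ c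
  · have key := mul_le_mul_of_nonneg_left hlogN3 (div_nonneg hc (by norm_num) : (0:ℝ) ≤ c / 2)
    linarith [hsum1, hsum3, h, hsum2.le, hsum2.ge, hsum4.le, hsum4.ge]
  · push_neg at hc
    have : (0:ℝ) ≤ (((Finset.range J).filter
        (fun j => ∃ a ∈ A, k * 2 ^ j ≤ a ∧ a < k * 2 ^ (j + 1))).card : ℝ) := by positivity
    have hJ0 : (0:ℝ) ≤ (J:ℝ) := by positivity
    nlinarith


open scoped Classical in
lemma blocks_exist (A : Set ℕ) (c : ℝ) (Q : ℕ → Prop)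
    (hQ : ∀ N, Q N → 2 ≤ N ∧ ∃ k : ℕ, 1 ≤ k ∧
      c / 2 * Real.log N
        < ∑ x ∈ Finset.Icc k (N * k), Set.indicator A (fun x => 1 / (x : ℝ)) x) :
    ∃ (kf Jf : ℕ → ℕ) (Sf : ℕ → Finset ℕ),
      (∀ N, 1 ≤ Jf N) ∧
      (∀ t : ℕ, ∀ᶠ N in Filter.atTop, t ≤ Jf N) ∧
      (∀ N, Sf N ⊆ Finset.range (Jf N)) ∧
      (∀ N, Q N → c / 16 * ((Jf N : ℕ) : ℝ) ≤ ((Sf N).card : ℝ)) ∧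
      (∀ N, 1 ≤ kf N) ∧
      (∀ N j, j ∈ Sf N → ∃ a ∈ A, kf N * 2 ^ j ≤ a ∧ a < kf N * 2 ^ (j + 1)) := by
  have hch : ∀ N : ℕ, ∃ k : ℕ, 1 ≤ k ∧ (Q N →
      c / 2 * Real.log N
        < ∑ x ∈ Finset.Icc k (N * k), Set.indicator A (fun x => 1 / (x : ℝ)) x) := by
    intro N
    by_cases h : Q N
    · obtain ⟨k, hk1, hk2⟩ := (hQ N h).2
      exact ⟨k, hk1, fun _ => hk2⟩
    · exact ⟨1, le_refl 1, fun h' => absurd h' h⟩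
  choose kf hkf1 hkf2 using hch
  refine ⟨kf, fun N => Nat.log 2 N + 1,
    fun N => (Finset.range (Nat.log 2 N + 1)).filter
      (fun j => ∃ a ∈ A, kf N * 2 ^ j ≤ a ∧ a < kf N * 2 ^ (j + 1)),
    fun N => Nat.le_add_left 1 _, ?_, fun N => Finset.filter_subset _ _, ?_, hkf1, ?_⟩
  · intro t
    filter_upwards [Filter.eventually_ge_atTop (2 ^ t)] with N hN
    have : t ≤ Nat.log 2 N := Nat.le_log_of_pow_le (by norm_num) hN
    omega
  · intro N hQN
    exact block_density A c (kf N) N (hkf1 N) (hQ N hQN).1 (hkf2 N hQN)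
  · intro N j hj
    exact (Finset.mem_filter.1 hj).2


set_option maxHeartbeats 1000000 in
theorem approx_geometric_progression (A : Set ℕ) (hA' : ∀ a ∈ A, 0 < a)
    (hA : 0 < lBD A) (l : ℕ) (hl : 1 ≤ l) :
    ∃ n : ℕ, 0 < n ∧ ∀ m : ℕ, ∃ a r : ℕ, m < a ∧ m < r ∧
      ApproxSubset n {x : ℕ | ∃ i < l, x = a * r ^ i} A := by
  set c := lBD A with hcdef
  have hseq_nonneg : ∀ N : ℕ, 0 ≤ lBDseq A N := by
    intro N
    apply Real.iSup_nonneg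
    intro k
    apply mul_nonneg
    · apply div_nonneg (by norm_num)
      rcases Nat.eq_zero_or_pos N with h0 | h1
      · simp [h0]
      · apply Real.log_nonneg
        exact_mod_cast h1
    · apply Finset.sum_nonneg
      intro x _
      apply Set.indicator_nonneg
      intro y _
      positivity
  have hbdd_ge : Filter.IsBoundedUnder (· ≥ ·) Filter.atTop (lBDseq A) :=
    ⟨0, Filter.eventually_map.2 (Filter.Eventually.of_forall hseq_nonneg)⟩
  have hfreq0 : ∃ᶠ N in Filter.atTop, c / 2 < lBDseq A N := by
    apply Filter.frequently_lt_of_lt_limsup hbdd_ge.isCoboundedUnder_le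
    show c / 2 < lBD A
    linarith
  have hkey : ∀ N : ℕ, 2 ≤ N → c / 2 < lBDseq A N → ∃ k, 1 ≤ k ∧
      c / 2 * Real.log N
        < ∑ x ∈ Finset.Icc k (N * k), Set.indicator A (fun x => 1 / (x : ℝ)) x := by
    intro N hN hlt
    have hlogpos : 0 < Real.log N := by
      apply Real.log_pos
      exact_mod_cast hN
    by_contra hcon
    push_neg at hcon
    have hle : lBDseq A N ≤ c / 2 := by
      rw [lBDseq]
      have hne : Nonempty {k : ℕ // 1 ≤ k} := ⟨⟨1, le_refl 1⟩⟩
      apply ciSup_le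
      intro k
      have h1 := hcon (k : ℕ) k.2
      have h2 : (1 / Real.log N) *
          (∑ x ∈ Finset.Icc (k : ℕ) (N * (k : ℕ)), Set.indicator A (fun x => 1 / (x : ℝ)) x)
          ≤ (1 / Real.log N) * (c / 2 * Real.log N) :=
        mul_le_mul_of_nonneg_left h1 (by positivity)
      have h3 : (1 / Real.log N) * (c / 2 * Real.log N) = c / 2 := by
        field_simp
      linarith
    linarith
  have hQfreq : ∃ᶠ N : ℕ in Filter.atTop, (2 ≤ N ∧ ∃ k : ℕ, 1 ≤ k ∧
      c / 2 * Real.log N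
        < ∑ x ∈ Finset.Icc k (N * k), Set.indicator A (fun x => 1 / (x : ℝ)) x) := by
    apply (hfreq0.and_eventually (Filter.eventually_ge_atTop 2)).mono
    rintro N ⟨h1, h2⟩
    exact ⟨h2, hkey N h2 h1⟩
  set Q : ℕ → Prop := fun N => 2 ≤ N ∧ ∃ k : ℕ, 1 ≤ k ∧
      c / 2 * Real.log N
        < ∑ x ∈ Finset.Icc k (N * k), Set.indicator A (fun x => 1 / (x : ℝ)) x with hQdef
  set δ : ℝ := c / 16 with hδdef
  have hδpos : 0 < δ := by rw [hδdef]; linarith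
  obtain ⟨kf, Jf, Sf, hJf1, hJfbig0, hSfrange, hSfcard, hkfpos, hSfmem⟩ :=
    blocks_exist A c Q (fun N h => h)
  set F : Filter ℕ := Filter.atTop ⊓ Filter.principal {N | Q N} with hFdef
  have hFne : F.NeBot := Filter.frequently_iff_neBot.1 hQfreq
  have hJfbig : ∀ t : ℕ, ∀ᶠ N in F, t ≤ Jf N :=
    fun t => Filter.Eventually.filter_mono inf_le_left (hJfbig0 t)
  have hQev : ∀ᶠ N in F, Q N := by
    rw [hFdef, Filter.eventually_inf_principal]
    exact Filter.Eventually.of_forall (fun N hN => hN)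
  obtain ⟨g, hgdef⟩ : ∃ g : ℕ → ℕ → ℝ,
      ∀ D N, g D N = ((fat D (Sf N)).card : ℝ) / ((Jf N : ℕ) : ℝ) :=
    ⟨_, fun D N => rfl⟩
  have hJfposR : ∀ N, (0:ℝ) < ((Jf N : ℕ) : ℝ) := by
    intro N
    exact_mod_cast hJf1 N
  have hg_nonneg : ∀ D N, 0 ≤ g D N := by
    intro D N
    rw [hgdef]
    exact div_nonneg (Nat.cast_nonneg _) (Nat.cast_nonneg _)
  have hg_le : ∀ D N, D + 1 ≤ Jf N → g D N ≤ 2 := by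
    intro D N hDN
    rw [hgdef]
    have h1 : ((fat D (Sf N)).card : ℝ) ≤ ((Jf N : ℕ) : ℝ) + D := by
      exact_mod_cast fat_card_le D (Sf N) (Jf N) (hSfrange N)
    rw [div_le_iff₀ (hJfposR N)]
    have hD : D ≤ Jf N := by omega
    have : (D : ℝ) ≤ ((Jf N : ℕ) : ℝ) := by exact_mod_cast hD
    linarith
  have hbddD : ∀ D, Filter.IsBoundedUnder (· ≤ ·) F (g D) := by
    intro D
    refine ⟨2, ?_⟩
    rw [Filter.eventually_map]
    filter_upwards [hJfbig (D + 1)] with N hN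
    exact hg_le D N hN
  have hcobddD : ∀ D, Filter.IsCoboundedUnder (· ≤ ·) F (g D) := by
    intro D
    exact Filter.IsBoundedUnder.isCoboundedUnder_le
      ⟨0, Filter.eventually_map.2 (Filter.Eventually.of_forall (hg_nonneg D))⟩
  obtain ⟨f, hfdef⟩ : ∃ f : ℕ → ℝ, ∀ D, f D = Filter.limsup (g D) F := ⟨_, fun D => rfl⟩
  have hf_le2 : ∀ D, f D ≤ 2 := by
    intro D
    rw [hfdef]
    apply Filter.limsup_le_of_le (hcobddD D)
    filter_upwards [hJfbig (D + 1)] with N hN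
    exact hg_le D N hN
  have hδf0 : δ ≤ f 0 := by
    rw [hfdef]
    apply Filter.le_limsup_of_frequently_le _ (hbddD 0)
    apply Filter.Eventually.frequently
    filter_upwards [hQev] with N hQN
    have h1 : c / 16 * ((Jf N : ℕ) : ℝ) ≤ ((Sf N).card : ℝ) := hSfcard N hQN
    have h2 : ((Sf N).card : ℝ) ≤ ((fat 0 (Sf N)).card : ℝ) := by
      exact_mod_cast Finset.card_le_card (subset_fat 0 (Sf N))
    rw [hgdef, le_div_iff₀ (hJfposR N)]
    rw [hδdef]
    linarith
  have hfbdd : BddAbove (Set.range f) := ⟨2, by rintro _ ⟨D, rfl⟩; exact hf_le2 D⟩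
  set cstar : ℝ := ⨆ D, f D with hcstardef
  have hf_le_cstar : ∀ D, f D ≤ cstar := fun D => le_ciSup hfbdd D
  have hδcstar : δ ≤ cstar := le_trans hδf0 (hf_le_cstar 0)
  have hl1 : (1:ℝ) ≤ (l : ℝ) := by exact_mod_cast hl
  set η : ℝ := δ / (8 * ((l : ℝ) + 1)) with hηdef
  have hηpos : 0 < η := by rw [hηdef]; positivity
  obtain ⟨D₀, hD₀⟩ : ∃ D₀, cstar - η < f D₀ := by
    by_contra hcon
    push_neg at hcon
    have : cstar ≤ cstar - η := ciSup_le hcon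
    linarith
  -- the answer
  refine ⟨2 ^ (2 * D₀ + 1), pow_pos (by norm_num) _, ?_⟩
  intro m
  set ρ : ℕ := m + 1 with hρdef
  set X₀ : ℕ := D₀ + m + 1 with hX₀def
  obtain ⟨n₀r, hn₀r⟩ := exists_nat_gt ((2 * ((X₀ : ℝ) + 1)) / δ)
  have hEa : ∀ᶠ N in F, g (D₀ + l * ρ) N < cstar + η := by
    apply Filter.eventually_lt_of_limsup_lt _ (hbddD (D₀ + l * ρ))
    rw [← hfdef]
    calc f (D₀ + l * ρ) ≤ cstar := hf_le_cstar _
      _ < cstar + η := by linarith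
  have hEb : ∀ᶠ N in F, (X₀ : ℝ) < δ / 2 * ((Jf N : ℕ) : ℝ) := by
    filter_upwards [hJfbig n₀r] with N hN
    have h1 : (n₀r : ℝ) ≤ ((Jf N : ℕ) : ℝ) := by exact_mod_cast hN
    have h2 : 2 * ((X₀ : ℝ) + 1) / δ < ((Jf N : ℕ) : ℝ) := lt_of_lt_of_le hn₀r h1
    rw [div_lt_iff₀ hδpos] at h2
    nlinarith [hJfposR N]
  have hFd : ∃ᶠ N in F, cstar - 2 * η < g D₀ N := by
    apply Filter.frequently_lt_of_lt_limsup (hcobddD D₀)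
    rw [← hfdef]
    calc cstar - 2 * η < cstar - η := by linarith
      _ < f D₀ := hD₀
  obtain ⟨N, hgD₀N, hgD'N, hX₀J, hQN⟩ :=
    (hFd.and_eventually (hEa.and (hEb.and hQev))).exists
  -- numeric extraction
  have hJpos := hJfposR N
  rw [hgdef, lt_div_iff₀ hJpos] at hgD₀N
  rw [hgdef, div_lt_iff₀ hJpos] at hgD'N
  have hE₀E' : ((fat D₀ (Sf N)).card : ℝ) ≤ ((fat (D₀ + l * ρ) (Sf N)).card : ℝ) := by
    exact_mod_cast Finset.card_le_card (fat_mono (by omega) (Sf N))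
  have hcore_in : (X₀ : ℝ) + l * (((fat (D₀ + l * ρ) (Sf N)).card : ℝ)
      - ((fat D₀ (Sf N)).card : ℝ)) < ((fat D₀ (Sf N)).card : ℝ) := by
    have hd : ((fat (D₀ + l * ρ) (Sf N)).card : ℝ) - ((fat D₀ (Sf N)).card : ℝ)
        ≤ 3 * η * ((Jf N : ℕ) : ℝ) := by linarith
    have h2 : (l : ℝ) * (((fat (D₀ + l * ρ) (Sf N)).card : ℝ) - ((fat D₀ (Sf N)).card : ℝ))
        ≤ (l : ℝ) * (3 * η * ((Jf N : ℕ) : ℝ)) :=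
      mul_le_mul_of_nonneg_left hd (by positivity)
    have hlpos : (0:ℝ) < (l : ℝ) + 1 := by linarith
    have h3 : (l : ℝ) * (3 * η * ((Jf N : ℕ) : ℝ))
        ≤ 3 / 8 * δ * ((Jf N : ℕ) : ℝ) := by
      rw [hηdef]
      have hq : (l : ℝ) * (3 * (δ / (8 * ((l : ℝ) + 1))) * ((Jf N : ℕ) : ℝ))
          = 3 / 8 * δ * ((Jf N : ℕ) : ℝ) * ((l : ℝ) / ((l : ℝ) + 1)) := by
        field_simp
      rw [hq]
      have hratio : (l : ℝ) / ((l : ℝ) + 1) ≤ 1 := by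
        rw [div_le_one hlpos]; linarith
      have hnn : (0:ℝ) ≤ 3 / 8 * δ * ((Jf N : ℕ) : ℝ) := by positivity
      nlinarith
    have h4 : 2 * η ≤ δ / 8 := by
      rw [hηdef]
      rw [mul_div_assoc', div_le_div_iff₀ (by positivity) (by norm_num)]
      nlinarith [hδpos.le]
    have h5 : (δ - δ / 8) * ((Jf N : ℕ) : ℝ) ≤ (cstar - 2 * η) * ((Jf N : ℕ) : ℝ) := by
      apply mul_le_mul_of_nonneg_right _ hJpos.le
      linarith
    nlinarith [hgD₀N, hgD'N, hX₀J]
  obtain ⟨x, hxX₀, hx⟩ := core_count (Sf N) D₀ ρ l X₀ hcore_in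
  -- block witnesses
  have hblock : ∀ i, i < l → ∃ s, (s ≤ x + i * ρ + D₀ ∧ x + i * ρ ≤ s + D₀) ∧
      ∃ a ∈ A, kf N * 2 ^ s ≤ a ∧ a < kf N * 2 ^ (s + 1) := by
    intro i hi
    obtain ⟨s, hsS, h1, h2⟩ := hx i hi
    exact ⟨s, ⟨h1, h2⟩, hSfmem N s hsS⟩
  obtain ⟨s₀, ⟨hs₀1, hs₀2⟩, a₀, ha₀A, ha₀1, ha₀2⟩ := hblock 0 (by omega)
  have hkpos : 1 ≤ kf N := hkfpos N
  refine ⟨a₀, 2 ^ ρ, ?_, ?_, ?_⟩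
  · -- m < a₀
    have hs₀m : m + 1 ≤ s₀ := by omega
    have h1 : 2 ^ (m + 1) ≤ 2 ^ s₀ := Nat.pow_le_pow_right (by norm_num) hs₀m
    have h2 : 2 ^ s₀ ≤ kf N * 2 ^ s₀ := Nat.le_mul_of_pos_left _ (by omega)
    have h3 : m < 2 ^ (m + 1) := by
      calc m < 2 ^ m := Nat.lt_two_pow_self
        _ ≤ 2 ^ (m + 1) := Nat.pow_le_pow_right (by norm_num) (by omega)
    omega
  · -- m < 2 ^ ρ
    calc m < 2 ^ m := Nat.lt_two_pow_self
      _ ≤ 2 ^ ρ := Nat.pow_le_pow_right (by norm_num) (by omega)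
  · intro y hy
    obtain ⟨i, hi, rfl⟩ := hy
    obtain ⟨s, ⟨hsa, hsb⟩, b, hbA, hb1, hb2⟩ := hblock i hi
    have hcomm : ρ * i = i * ρ := Nat.mul_comm ρ i
    refine ⟨b, hbA, ?_, ?_⟩
    · rw [← pow_mul]
      calc a₀ * 2 ^ (ρ * i) < (kf N * 2 ^ (s₀ + 1)) * 2 ^ (ρ * i) :=
            mul_lt_mul_of_pos_right ha₀2 (pow_pos (by norm_num) _)
        _ = kf N * 2 ^ (s₀ + 1 + ρ * i) := by rw [pow_add]; ring
        _ ≤ kf N * 2 ^ (s + 2 * D₀ + 1) := by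
            apply Nat.mul_le_mul_left
            apply Nat.pow_le_pow_right (by norm_num)
            omega
        _ = (kf N * 2 ^ s) * 2 ^ (2 * D₀ + 1) := by
            rw [show s + 2 * D₀ + 1 = s + (2 * D₀ + 1) by omega, pow_add]; ring
        _ ≤ b * 2 ^ (2 * D₀ + 1) := Nat.mul_le_mul_right _ hb1
    · rw [← pow_mul]
      calc b < kf N * 2 ^ (s + 1) := hb2
        _ ≤ kf N * 2 ^ (s₀ + ρ * i + 2 * D₀ + 1) := by
            apply Nat.mul_le_mul_left
            apply Nat.pow_le_pow_right (by norm_num)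
            omega
        _ = (kf N * 2 ^ s₀) * 2 ^ (ρ * i) * 2 ^ (2 * D₀ + 1) := by
            rw [show s₀ + ρ * i + 2 * D₀ + 1 = s₀ + (ρ * i) + (2 * D₀ + 1) by omega,
              pow_add, pow_add]
            ring
        _ ≤ (a₀ * 2 ^ (ρ * i)) * 2 ^ (2 * D₀ + 1) := by
            apply Nat.mul_le_mul_right
            exact Nat.mul_le_mul_right _ ha₀1
end

section
/- Let 0 < α < 1 and let j ∈ ℕ satisfy (j−1)/j > α. Let (u_i) be a sequence of positive integers with u_0 = 2 and u_{i+1} > (j·u_i)³ for all i ≥ 0, and set A = ⋃_{i=1}^∞ ([u_i, j·u_i] ∩ ℕ). Then for any n ∈ ℕ there exists m ∈ ℕ such that there is no 3-term geometric progression G = {a, a·r, a·r²} with a > m and r > m that is an n-approximate subset of A. -/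
open Filter

theorem no_approx_geometric_in_sparse_union (α : ℝ) (hα0 : 0 < α) (hα1 : α < 1)
    (j : ℕ) (hj : α < ((j : ℝ) - 1) / j)
    (u : ℕ → ℕ) (hu0 : u 0 = 2) (hu : ∀ i : ℕ, (j * u i) ^ 3 < u (i + 1))
    (A : Set ℕ) (hA : A = ⋃ i ∈ {i : ℕ | 1 ≤ i}, Set.Icc (u i) (j * u i)) :
    ∀ n : ℕ, 0 < n → ∃ m : ℕ, ∀ a r : ℕ, m < a → m < r →
      ¬ ApproxSubset n ({a, a * r, a * r ^ 2} : Set ℕ) A := by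
  intro n hn
  have hj1 : 1 ≤ j := by
    rcases Nat.eq_zero_or_pos j with h | h
    · subst h; norm_num at hj; linarith
    · exact h
  have hu2 : ∀ i, 2 ≤ u i := by
    intro i
    induction i with
    | zero => omega
    | succ i ih =>
      have h1 := hu i
      have h2 : 2 ≤ j * u i := by nlinarith
      have h3 : j * u i ≤ (j * u i) ^ 3 := Nat.le_self_pow (by norm_num) _
      omega
  have hmono : StrictMono u := by
    apply strictMono_nat_of_lt_succ
    intro i
    have h1 := hu i
    have h2 := hu2 i
    have h3 : u i ≤ j * u i := Nat.le_mul_of_pos_left _ hj1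
    have h4 : j * u i ≤ (j * u i) ^ 3 := Nat.le_self_pow (by norm_num) _
    omega
  refine ⟨j * n ^ 5, ?_⟩
  intro a r ha hr hap
  have hm1 : 0 < j * n ^ 5 := by positivity
  have ha0 : 0 < a := by omega
  have hr0 : 0 < r := by omega
  obtain ⟨b1, hb1A, hb1, hb1'⟩ := hap a (by simp)
  obtain ⟨b2, hb2A, hb2, hb2'⟩ := hap (a * r) (by simp)
  obtain ⟨b3, hb3A, hb3, hb3'⟩ := hap (a * r ^ 2) (by simp)
  rw [hA] at hb1A hb2A hb3A
  simp only [Set.mem_iUnion, Set.mem_Icc, Set.mem_setOf_eq, exists_prop] at hb1A hb2A hb3A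
  obtain ⟨i1, hi1, hl1, hr1⟩ := hb1A
  obtain ⟨i2, hi2, hl2, hr2⟩ := hb2A
  obtain ⟨i3, hi3, hl3, hr3⟩ := hb3A
  -- r is big
  have hn25 : n ^ 2 ≤ n ^ 5 := Nat.pow_le_pow_right hn (by norm_num)
  have hrbig : j * n ^ 2 < r := by
    calc j * n ^ 2 ≤ j * n ^ 5 := Nat.mul_le_mul_left j hn25
    _ < r := hr
  -- bands are strictly increasing
  have h12 : i1 < i2 := by
    by_contra h
    push_neg at h
    have hmu : u i2 ≤ u i1 := hmono.monotone h
    have hch : a * r < a * (j * n ^ 2) := by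
      calc a * r < b2 * n := hb2
      _ ≤ (j * u i2) * n := Nat.mul_le_mul_right n hr2
      _ ≤ (j * u i1) * n := Nat.mul_le_mul_right n (Nat.mul_le_mul_left j hmu)
      _ ≤ (j * b1) * n := Nat.mul_le_mul_right n (Nat.mul_le_mul_left j hl1)
      _ ≤ (j * (a * n)) * n := Nat.mul_le_mul_right n (Nat.mul_le_mul_left j hb1'.le)
      _ = a * (j * n ^ 2) := by ring
    have : r < j * n ^ 2 := lt_of_mul_lt_mul_left hch (Nat.zero_le a)
    omega
  have h23 : i2 < i3 := by
    by_contra h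
    push_neg at h
    have hmu : u i3 ≤ u i2 := hmono.monotone h
    have hch : (a * r) * r < (a * r) * (j * n ^ 2) := by
      calc (a * r) * r = a * r ^ 2 := by ring
      _ < b3 * n := hb3
      _ ≤ (j * u i3) * n := Nat.mul_le_mul_right n hr3
      _ ≤ (j * u i2) * n := Nat.mul_le_mul_right n (Nat.mul_le_mul_left j hmu)
      _ ≤ (j * b2) * n := Nat.mul_le_mul_right n (Nat.mul_le_mul_left j hl2)
      _ ≤ (j * (a * r * n)) * n := Nat.mul_le_mul_right n (Nat.mul_le_mul_left j hb2'.le)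
      _ = (a * r) * (j * n ^ 2) := by ring
    have : r < j * n ^ 2 := lt_of_mul_lt_mul_left hch (Nat.zero_le (a * r))
    omega
  -- sparseness
  have hstep : (j * u i2) ^ 3 < u i3 :=
    lt_of_lt_of_le (hu i2) (hmono.monotone h23)
  -- main inequality chain
  have hui1 : 0 < u i1 := lt_of_lt_of_le (by norm_num) (hu2 i1)
  have key : b1 * b3 < b2 ^ 2 * n ^ 4 := by
    calc b1 * b3 < (a * n) * (a * r ^ 2 * n) :=
          mul_lt_mul'' hb1' hb3' (Nat.zero_le _) (Nat.zero_le _)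
    _ = (a * r) ^ 2 * n ^ 2 := by ring
    _ < (b2 * n) ^ 2 * n ^ 2 :=
          mul_lt_mul_of_pos_right (Nat.pow_lt_pow_left hb2 (by norm_num)) (pow_pos hn 2)
    _ = b2 ^ 2 * n ^ 4 := by ring
  have key2 : u i1 * (j * u i2) ^ 3 < (j * u i2) ^ 2 * n ^ 4 := by
    calc u i1 * (j * u i2) ^ 3 < u i1 * u i3 := mul_lt_mul_of_pos_left hstep hui1
    _ ≤ b1 * b3 := Nat.mul_le_mul hl1 hl3
    _ < b2 ^ 2 * n ^ 4 := key
    _ ≤ (j * u i2) ^ 2 * n ^ 4 :=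
          Nat.mul_le_mul_right _ (Nat.pow_le_pow_left hr2 2)
  have key3 : u i1 * (j * u i2) < n ^ 4 := by
    have h' : (u i1 * (j * u i2)) * (j * u i2) ^ 2 < n ^ 4 * (j * u i2) ^ 2 := by
      calc (u i1 * (j * u i2)) * (j * u i2) ^ 2 = u i1 * (j * u i2) ^ 3 := by ring
      _ < (j * u i2) ^ 2 * n ^ 4 := key2
      _ = n ^ 4 * (j * u i2) ^ 2 := by ring
    exact lt_of_mul_lt_mul_right h' (Nat.zero_le _)
  -- but u i1 is big
  have hbig : j * (n ^ 4 * n) < j * (u i1 * n) := by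
    calc j * (n ^ 4 * n) = j * n ^ 5 := by ring
    _ < a := ha
    _ < b1 * n := hb1
    _ ≤ (j * u i1) * n := Nat.mul_le_mul_right n hr1
    _ = j * (u i1 * n) := by ring
  have hbig2 : n ^ 4 < u i1 := by
    have h'' : n ^ 4 * n < u i1 * n := lt_of_mul_lt_mul_left hbig (Nat.zero_le j)
    exact lt_of_mul_lt_mul_right h'' (Nat.zero_le n)
  have hj2 : 1 ≤ j * u i2 := by
    have := hu2 i2; nlinarith
  have : u i1 ≤ u i1 * (j * u i2) := Nat.le_mul_of_pos_right _ (by omega)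
  omega
end

section
/- Let 0 < α < 1 and let j ∈ ℕ satisfy (j−1)/j > α. Let (u_i) be a sequence of positive integers with u_0 = 2 and u_{i+1} > (j·u_i)³ for all i ≥ 0, and set A = ⋃_{i=1}^∞ ([u_i, j·u_i] ∩ ℕ). Then the upper density of A is greater than α, while the upper Banach logarithmic density of A equals 0. -/
open Filter

open scoped Classical in
/-- The number of elements of `A ∩ [1,n]`, as a real number. -/
noncomputable def cnt (A : Set ℕ) (n : ℕ) : ℝ :=
  ((Finset.Icc 1 n).filter (· ∈ A)).card

/-- Upper (asymptotic) density. -/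
noncomputable def ud (A : Set ℕ) : ℝ :=
  Filter.limsup (fun n : ℕ => cnt A n / n) Filter.atTop

/- ### Auxiliary lemmas -/

open Topology

lemma two_le_j' (α : ℝ) (hα0 : 0 < α) (j : ℕ) (hj : α < ((j : ℝ) - 1) / j) : 2 ≤ j := by
  by_contra h
  interval_cases j <;> norm_num at hj <;> linarith

section U
variable (j : ℕ) (hj2 : 2 ≤ j) (u : ℕ → ℕ) (hu0 : u 0 = 2)
    (hu : ∀ i : ℕ, (j * u i) ^ 3 < u (i + 1))

include hj2 hu0 hu

lemma u_ge_two : ∀ i, 2 ≤ u i := by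
  intro i
  induction i with
  | zero => omega
  | succ i ih =>
    have h4 : 4 ≤ j * u i := by
      calc 4 = 2 * 2 := rfl
      _ ≤ j * u i := Nat.mul_le_mul hj2 ih
    have : 4 ^ 3 ≤ (j * u i) ^ 3 := Nat.pow_le_pow_left h4 3
    have := hu i
    omega

lemma u_mono : StrictMono u := by
  apply strictMono_nat_of_lt_succ
  intro i
  have h2 := u_ge_two j hj2 u hu0 hu i
  have h1 : u i ≤ j * u i := Nat.le_mul_of_pos_left _ (by omega)
  have h3 : j * u i ≤ (j * u i) ^ 3 := Nat.le_self_pow (by norm_num) _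
  have := hu i
  omega

lemma u_pow : ∀ i, 2 ^ (2 ^ i) ≤ u i := by
  intro i
  induction i with
  | zero => simp [hu0]
  | succ i ih =>
    have h2 : 2 ≤ u i := u_ge_two j hj2 u hu0 hu i
    calc 2 ^ (2 ^ (i + 1)) = (2 ^ (2 ^ i)) ^ 2 := by
          rw [← pow_mul]; ring_nf
      _ ≤ (u i) ^ 2 := Nat.pow_le_pow_left ih 2
      _ ≤ (u i) ^ 3 := Nat.pow_le_pow_right (by omega) (by omega)
      _ ≤ (j * u i) ^ 3 := Nat.pow_le_pow_left (Nat.le_mul_of_pos_left _ (by omega)) 3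
      _ ≤ u (i + 1) := (hu i).le

lemma u_big : ∀ i, i + 2 ≤ u i := by
  intro i
  match i with
  | 0 => omega
  | (i+1) =>
    have h1 : i + 2 ≤ 2 ^ (i + 1) := Nat.lt_two_pow_self (n := i+1)
    calc i + 1 + 2 ≤ 2 ^ (i+1) + 1 := by omega
      _ ≤ 2 ^ (2 ^ (i+1)) := by
          have : 2 ^ (i+1) < 2 ^ (2 ^ (i+1)) := Nat.lt_two_pow_self
          omega
      _ ≤ u (i+1) := u_pow j hj2 u hu0 hu (i+1)

end U

lemma block_mass (j : ℕ) (hj2 : 2 ≤ j) (a : ℕ) (ha : 1 ≤ a) :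
    ∑ x ∈ Finset.Icc a (j * a), (1 / (x : ℝ)) ≤ j := by
  have haR : (0 : ℝ) < a := by exact_mod_cast ha
  calc ∑ x ∈ Finset.Icc a (j * a), (1 / (x : ℝ))
      ≤ (Finset.Icc a (j * a)).card • (1 / (a : ℝ)) := by
        apply Finset.sum_le_card_nsmul
        intro x hx
        rw [Finset.mem_Icc] at hx
        have : (a : ℝ) ≤ x := by exact_mod_cast hx.1
        exact one_div_le_one_div_of_le haR this
    _ ≤ (j * a : ℕ) • (1 / (a : ℝ)) := by
        apply nsmul_le_nsmul_left (by positivity)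
        rw [Nat.card_Icc]
        have h1 : a ≤ j * a := Nat.le_mul_of_pos_left _ (by omega)
        omega
    _ = (j : ℝ) := by
        rw [nsmul_eq_mul]
        push_cast
        field_simp

open scoped Classical in
lemma key_bound (j : ℕ) (hj2 : 2 ≤ j) (u : ℕ → ℕ) (hu0 : u 0 = 2)
    (hu : ∀ i : ℕ, (j * u i) ^ 3 < u (i + 1))
    (A : Set ℕ) (hA : A = ⋃ i ∈ {i : ℕ | 1 ≤ i}, Set.Icc (u i) (j * u i))
    (n k : ℕ) (hn : 2 ≤ n) (hk : 1 ≤ k) :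
    ∑ x ∈ Finset.Icc k (n * k), Set.indicator A (fun x => 1 / (x : ℝ)) x
      ≤ (j : ℝ) * ((Nat.log 2 (Nat.log 2 n) : ℝ) + 1) := by
  set f : ℕ → ℝ := fun x => 1 / (x : ℝ) with hf
  have hf0 : ∀ x : ℕ, 0 ≤ f x := fun x => by positivity
  set N := n * k with hN
  set T := Finset.Icc k (n * k) with hT
  set m : ℕ → ℝ := fun i => ∑ x ∈ T, Set.indicator (Set.Icc (u i) (j * u i)) f x with hm
  have hm0 : ∀ i, 0 ≤ m i := fun i =>
    Finset.sum_nonneg fun x _ => Set.indicator_nonneg (fun y _ => hf0 y) x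
  set M := Nat.log 2 (Nat.log 2 n) with hM
  -- Step A : bound by sum over blocks
  have stepA : ∑ x ∈ T, Set.indicator A f x ≤ ∑ i ∈ Finset.Icc 1 N, m i := by
    have : ∑ i ∈ Finset.Icc 1 N, m i
        = ∑ x ∈ T, ∑ i ∈ Finset.Icc 1 N, Set.indicator (Set.Icc (u i) (j * u i)) f x :=
      Finset.sum_comm
    rw [this]
    apply Finset.sum_le_sum
    intro x hx
    by_cases hxA : x ∈ A
    · rw [hA] at hxA
      simp only [Set.mem_iUnion, Set.mem_setOf_eq] at hxA
      obtain ⟨i, hi1, hxi⟩ := hxA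
      have hxT : k ≤ x ∧ x ≤ n * k := Finset.mem_Icc.mp hx
      have hiN : i ∈ Finset.Icc 1 N := by
        rw [Finset.mem_Icc]
        have h1 := u_big j hj2 u hu0 hu i
        have h2 := hxi.1
        exact ⟨hi1, by omega⟩
      have : Set.indicator A f x = Set.indicator (Set.Icc (u i) (j * u i)) f x := by
        rw [Set.indicator_of_mem _ f, Set.indicator_of_mem hxi f]
        rw [hA]
        simp only [Set.mem_iUnion, Set.mem_setOf_eq]
        exact ⟨i, hi1, hxi⟩
      rw [this]
      exact Finset.single_le_sum
        (f := fun i => Set.indicator (Set.Icc (u i) (j * u i)) f x)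
        (fun i _ => Set.indicator_nonneg (fun y _ => hf0 y) x) hiN
    · rw [Set.indicator_of_notMem hxA]
      exact Finset.sum_nonneg fun i _ => Set.indicator_nonneg (fun y _ => hf0 y) x
  -- each block mass is at most j
  have hmj : ∀ i, 1 ≤ i → m i ≤ (j : ℝ) := by
    intro i hi
    have h2 := u_ge_two j hj2 u hu0 hu i
    calc m i = ∑ x ∈ T.filter (fun x => x ∈ Set.Icc (u i) (j * u i)), f x := by
          rw [hm]
          exact Finset.sum_indicator_eq_sum_filter T (fun _ y => f y) _ id
      _ ≤ ∑ x ∈ Finset.Icc (u i) (j * u i), f x := by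
          apply Finset.sum_le_sum_of_subset_of_nonneg
          · intro x hx
            rw [Finset.mem_filter] at hx
            rw [Finset.mem_Icc]
            exact hx.2
          · intro x _ _; exact hf0 x
      _ ≤ (j : ℝ) := block_mass j hj2 (u i) (by omega)
  -- key separation claim
  have keyC : ∀ i i', 1 ≤ i → i < i' → m i ≠ 0 → m i' ≠ 0 → i + 1 ≤ M := by
    intro i i' hi1 hii' hmi hmi'
    obtain ⟨x, hxT, hxind⟩ := Finset.exists_ne_zero_of_sum_ne_zero hmi
    obtain ⟨y, hyT, hyind⟩ := Finset.exists_ne_zero_of_sum_ne_zero hmi'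
    have hxB : x ∈ Set.Icc (u i) (j * u i) := by
      by_contra h; exact hxind (Set.indicator_of_notMem h f)
    have hyB : y ∈ Set.Icc (u i') (j * u i') := by
      by_contra h; exact hyind (Set.indicator_of_notMem h f)
    rw [Finset.mem_Icc] at hxT hyT
    have hkx : k ≤ j * u i := le_trans hxT.1 hxB.2
    have hy1 : u i' ≤ n * k := le_trans hyB.1 hyT.2
    have hmono := u_mono j hj2 u hu0 hu
    have hstep : (j * u i) ^ 3 < u i' :=
      lt_of_lt_of_le (hu i) (hmono.monotone hii')
    set w := j * u i with hw
    have hw2 : 2 ≤ w := le_trans (u_ge_two j hj2 u hu0 hu i)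
      (Nat.le_mul_of_pos_left _ (by omega))
    have hcube : w ^ 3 < n * w := by
      calc w ^ 3 < u i' := hstep
        _ ≤ n * k := hy1
        _ ≤ n * w := Nat.mul_le_mul_left n hkx
    have hsq : w ^ 2 < n := by
      have : w ^ 2 * w < n * w := by
        calc w ^ 2 * w = w ^ 3 := by ring
          _ < n * w := hcube
      exact Nat.lt_of_mul_lt_mul_right this
    have hpow2 : 2 ^ (2 ^ (i + 1)) ≤ n := by
      calc 2 ^ (2 ^ (i + 1)) = (2 ^ (2 ^ i)) ^ 2 := by rw [← pow_mul]; ring_nf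
        _ ≤ (u i) ^ 2 := Nat.pow_le_pow_left (u_pow j hj2 u hu0 hu i) 2
        _ ≤ w ^ 2 := Nat.pow_le_pow_left (Nat.le_mul_of_pos_left _ (by omega)) 2
        _ ≤ n := hsq.le
    have hlog1 : 2 ^ (i + 1) ≤ Nat.log 2 n :=
      (Nat.le_log_iff_pow_le one_lt_two (by omega)).mpr hpow2
    have hlogne : Nat.log 2 n ≠ 0 := by
      have : 2 ≤ 2 ^ (i + 1) := Nat.one_lt_two_pow (by omega)
      omega
    exact (Nat.le_log_iff_pow_le one_lt_two hlogne).mpr hlog1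
  -- count the blocks
  set P := (Finset.Icc 1 N).filter (fun i => m i ≠ 0) with hP
  have hsumP : ∑ i ∈ Finset.Icc 1 N, m i = ∑ i ∈ P, m i :=
    (Finset.sum_filter_ne_zero _).symm
  rcases P.eq_empty_or_nonempty with hPe | hPne
  · rw [hsumP, hPe] at stepA
    simp at stepA
    calc ∑ x ∈ T, Set.indicator A f x ≤ 0 := stepA
      _ ≤ (j : ℝ) * ((M : ℝ) + 1) := by positivity
  · set i₀ := P.max' hPne with hi₀
    have hi₀P : i₀ ∈ P := P.max'_mem hPne
    have hcard : P.card ≤ M + 1 := by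
      have hsub : P.erase i₀ ⊆ Finset.Icc 1 M := by
        intro i hi
        have hiP := Finset.mem_of_mem_erase hi
        have hine := Finset.ne_of_mem_erase hi
        have hile := P.le_max' i hiP
        have hilt : i < i₀ := lt_of_le_of_ne hile hine
        rw [hP, Finset.mem_filter, Finset.mem_Icc] at hiP hi₀P
        have := keyC i i₀ hiP.1.1 hilt hiP.2 hi₀P.2
        rw [Finset.mem_Icc]
        omega
      have h1 : (P.erase i₀).card ≤ M := by
        calc (P.erase i₀).card ≤ (Finset.Icc 1 M).card := Finset.card_le_card hsub
          _ = M := by rw [Nat.card_Icc]; omega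
      have h2 : P.card ≤ (P.erase i₀).card + 1 := by
        rw [Finset.card_erase_of_mem hi₀P]
        omega
      omega
    calc ∑ x ∈ T, Set.indicator A f x ≤ ∑ i ∈ P, m i := by rw [← hsumP]; exact stepA
      _ ≤ ∑ _i ∈ P, (j : ℝ) := by
          apply Finset.sum_le_sum
          intro i hiP
          rw [hP, Finset.mem_filter, Finset.mem_Icc] at hiP
          exact hmj i hiP.1.1
      _ = (P.card : ℝ) * j := by rw [Finset.sum_const, nsmul_eq_mul]
      _ ≤ ((M : ℝ) + 1) * j := by
          have : (P.card : ℝ) ≤ (M : ℝ) + 1 := by exact_mod_cast hcard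
          apply mul_le_mul_of_nonneg_right this (by positivity)
      _ = (j : ℝ) * ((M : ℝ) + 1) := by ring

lemma natlog_le_real (m : ℕ) (hm : 1 ≤ m) : (Nat.log 2 m : ℝ) ≤ 2 * Real.log m := by
  have h1 : (2:ℕ) ^ Nat.log 2 m ≤ m := Nat.pow_log_le_self 2 (by omega)
  have h2 : ((2:ℝ)) ^ (Nat.log 2 m) ≤ (m:ℝ) := by exact_mod_cast h1
  have h3 : Real.log ((2:ℝ) ^ (Nat.log 2 m)) ≤ Real.log m := Real.log_le_log (by positivity) h2
  rw [Real.log_pow] at h3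
  have hl2 := Real.log_two_gt_d9
  nlinarith [(Nat.cast_nonneg (Nat.log 2 m) : (0:ℝ) ≤ _)]

lemma tendsto_aux (c : ℝ) :
    Tendsto (fun n : ℕ => (1 / Real.log n) * (c * (2 * Real.log (Real.log n) + 3)))
      atTop (𝓝 0) := by
  have hlog : Tendsto (fun n : ℕ => Real.log n) atTop atTop :=
    Real.tendsto_log_atTop.comp tendsto_natCast_atTop_atTop
  have h1 : Tendsto (fun t : ℝ => Real.log t / t) atTop (𝓝 0) :=
    Real.isLittleO_log_id_atTop.tendsto_div_nhds_zero
  have h2 : Tendsto (fun n : ℕ => Real.log (Real.log n) / Real.log n) atTop (𝓝 0) :=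
    h1.comp hlog
  have h3 : Tendsto (fun n : ℕ => (Real.log n)⁻¹) atTop (𝓝 0) := hlog.inv_tendsto_atTop
  have h4 := (h2.const_mul (2 * c)).add (h3.const_mul (3 * c))
  rw [mul_zero, mul_zero, add_zero] at h4
  convert h4 using 2 with n
  simp only [div_eq_mul_inv, one_div]
  ring

open scoped Classical in
lemma cnt_le_self (A : Set ℕ) (n : ℕ) : cnt A n ≤ n := by
  unfold cnt
  have h := Finset.card_filter_le (Finset.Icc 1 n) (· ∈ A)
  rw [Nat.card_Icc] at h
  exact_mod_cast h.trans (by omega)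

open scoped Classical in
lemma cnt_ge (A : Set ℕ) (a b : ℕ) (h1 : 1 ≤ a) (hsub : Set.Icc a b ⊆ A) :
    ((b + 1 - a : ℕ) : ℝ) ≤ cnt A b := by
  unfold cnt
  have hss : Finset.Icc a b ⊆ (Finset.Icc 1 b).filter (· ∈ A) := by
    intro x hx
    rw [Finset.mem_Icc] at hx
    rw [Finset.mem_filter, Finset.mem_Icc]
    exact ⟨⟨by omega, hx.2⟩, hsub ⟨hx.1, hx.2⟩⟩
  have h := Finset.card_le_card hss
  rw [Nat.card_Icc] at h
  exact_mod_cast h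

theorem sparse_union_ud_pos_lBD_zero (α : ℝ) (hα0 : 0 < α) (hα1 : α < 1)
    (j : ℕ) (hj : α < ((j : ℝ) - 1) / j)
    (u : ℕ → ℕ) (hu0 : u 0 = 2) (hu : ∀ i : ℕ, (j * u i) ^ 3 < u (i + 1))
    (A : Set ℕ) (hA : A = ⋃ i ∈ {i : ℕ | 1 ≤ i}, Set.Icc (u i) (j * u i)) :
    α < ud A ∧ lBD A = 0 := by
  have hj2 : 2 ≤ j := two_le_j' α hα0 j hj
  have hu2 := u_ge_two j hj2 u hu0 hu
  have hbig := u_big j hj2 u hu0 hu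
  constructor
  · -- upper density part
    have key1 : ∀ i : ℕ, 1 ≤ i → ((j:ℝ) - 1) / j ≤ cnt A (j * u i) / ((j * u i : ℕ) : ℝ) := by
      intro i hi
      have hsub : Set.Icc (u i) (j * u i) ⊆ A := by
        rw [hA]
        intro x hx
        simp only [Set.mem_iUnion, Set.mem_setOf_eq]
        exact ⟨i, hi, hx⟩
      have hge := cnt_ge A (u i) (j * u i) (by have := hu2 i; omega) hsub
      have hUle : u i ≤ j * u i := Nat.le_mul_of_pos_left _ (by omega)
      have hgeR : (j : ℝ) * (u i) - (u i) + 1 ≤ cnt A (j * u i) := by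
        have : ((j * u i + 1 - u i : ℕ) : ℝ) = (j : ℝ) * (u i) - (u i) + 1 := by
          push_cast [Nat.cast_sub (by omega : u i ≤ j * u i + 1)]
          ring
        rw [this] at hge
        exact hge
      have hJ : (2:ℝ) ≤ j := by exact_mod_cast hj2
      have hU : (2:ℝ) ≤ u i := by exact_mod_cast hu2 i
      have hpos : (0:ℝ) < ((j * u i : ℕ) : ℝ) := by
        have : 0 < j * u i := by nlinarith [hj2, hu2 i]
        exact_mod_cast this
      rw [div_le_div_iff₀ (by nlinarith) hpos]
      push_cast
      nlinarith
    have hfreq : ∃ᶠ n in atTop, ((j:ℝ) - 1) / j ≤ cnt A n / n := by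
      rw [Filter.frequently_atTop]
      intro N
      refine ⟨j * u (N + 1), ?_, key1 (N + 1) (by omega)⟩
      have h1 : u (N + 1) ≤ j * u (N + 1) := Nat.le_mul_of_pos_left _ (by omega)
      have := hbig (N + 1)
      omega
    have hbound : IsBoundedUnder (· ≤ ·) atTop (fun n : ℕ => cnt A n / n) := by
      apply isBoundedUnder_of
      refine ⟨1, fun n => ?_⟩
      rcases Nat.eq_zero_or_pos n with h0 | h0
      · subst h0; simp
      · rw [div_le_one (by exact_mod_cast h0)]
        exact cnt_le_self A n
    have := Filter.le_limsup_of_frequently_le hfreq hbound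
    exact lt_of_lt_of_le hj this
  · -- Banach logarithmic density part
    haveI : Nonempty {k : ℕ // 1 ≤ k} := ⟨⟨1, le_rfl⟩⟩
    have hmain : Tendsto (lBDseq A) atTop (𝓝 0) := by
      apply tendsto_of_tendsto_of_tendsto_of_le_of_le' tendsto_const_nhds (tendsto_aux (j:ℝ))
      · -- eventually 0 ≤ lBDseq A n
        filter_upwards [eventually_ge_atTop 3] with n hn
        have hn1 : (1:ℝ) < n := by exact_mod_cast (by omega : 1 < n)
        have hlogpos : 0 < Real.log n := Real.log_pos hn1
        have hterm : ∀ k : {k : ℕ // 1 ≤ k},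
            (1 / Real.log n) * ∑ x ∈ Finset.Icc (k : ℕ) (n * k),
              Set.indicator A (fun x => 1 / (x : ℝ)) x
            ≤ (1 / Real.log n) * ((j : ℝ) * ((Nat.log 2 (Nat.log 2 n) : ℝ) + 1)) := by
          intro k
          exact mul_le_mul_of_nonneg_left
            (key_bound j hj2 u hu0 hu A hA n k (by omega) k.2) (by positivity)
        have hbdd : BddAbove (Set.range fun k : {k : ℕ // 1 ≤ k} =>
            (1 / Real.log n) * ∑ x ∈ Finset.Icc (k : ℕ) (n * k),
              Set.indicator A (fun x => 1 / (x : ℝ)) x) := by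
          refine ⟨(1 / Real.log n) * ((j : ℝ) * ((Nat.log 2 (Nat.log 2 n) : ℝ) + 1)), ?_⟩
          rintro y ⟨k, rfl⟩
          exact hterm k
        have h0 : (0:ℝ) ≤ (1 / Real.log n) * ∑ x ∈ Finset.Icc ((⟨1, le_rfl⟩ : {k : ℕ // 1 ≤ k}) : ℕ) (n * (⟨1, le_rfl⟩ : {k : ℕ // 1 ≤ k})),
            Set.indicator A (fun x => 1 / (x : ℝ)) x := by
          apply mul_nonneg (by positivity)
          exact Finset.sum_nonneg fun x _ =>
            Set.indicator_nonneg (fun y _ => by positivity) x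
        exact le_trans h0 (le_ciSup hbdd _)
      · -- eventually lBDseq A n ≤ bound
        filter_upwards [eventually_ge_atTop 3] with n hn
        have hn1 : (1:ℝ) < n := by exact_mod_cast (by omega : 1 < n)
        have hlogpos : 0 < Real.log n := Real.log_pos hn1
        have hlog2n : 1 ≤ Nat.log 2 n :=
          (Nat.le_log_iff_pow_le one_lt_two (by omega)).mpr (by omega)
        have e1 : (Nat.log 2 (Nat.log 2 n) : ℝ) ≤ 2 * Real.log (Nat.log 2 n) :=
          natlog_le_real _ hlog2n
        have e2 : Real.log ((Nat.log 2 n : ℕ) : ℝ) ≤ Real.log (2 * Real.log n) := by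
          apply Real.log_le_log (by exact_mod_cast hlog2n)
          have := natlog_le_real n (by omega)
          linarith
        have e3 : Real.log (2 * Real.log n) = Real.log 2 + Real.log (Real.log n) :=
          Real.log_mul two_ne_zero (ne_of_gt hlogpos)
        have e4 : Real.log 2 ≤ 1 := by
          have := Real.log_two_lt_d9
          linarith
        have hM3 : (Nat.log 2 (Nat.log 2 n) : ℝ) + 1 ≤ 2 * Real.log (Real.log n) + 3 := by
          rw [e3] at e2
          linarith
        apply ciSup_le
        intro k
        calc (1 / Real.log n) * ∑ x ∈ Finset.Icc (k : ℕ) (n * k),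
              Set.indicator A (fun x => 1 / (x : ℝ)) x
            ≤ (1 / Real.log n) * ((j : ℝ) * ((Nat.log 2 (Nat.log 2 n) : ℝ) + 1)) :=
              mul_le_mul_of_nonneg_left
                (key_bound j hj2 u hu0 hu A hA n k (by omega) k.2) (by positivity)
          _ ≤ (1 / Real.log n) * ((j : ℝ) * (2 * Real.log (Real.log n) + 3)) := by
              apply mul_le_mul_of_nonneg_left _ (by positivity)
              apply mul_le_mul_of_nonneg_left hM3 (by positivity)
    exact hmain.limsup_eq
end
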